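/- Let 2 ≤ p ≤ p' < ∞ and 0 < κ ≤ κ'. Then there exists c_p ∈ (0,∞), depending only on p, such that Θ_{p,κ}(x) ≤ c_p Θ_{p',κ'}(x) for every continuously differentiable x : [0,1] → ℝ with x(0) = x(1) = 0. -/

import Mathlib

open Set MeasureTheory

/-- The Lyapunov weight `Θ_{p,κ}` of the paper, evaluated on a `C¹` path `x` with
derivative `x'`:  `Θ_{2,κ}(x) = exp(κ‖x‖₂²)(1 + ‖x'‖₂²)` and, for `p > 2`,
`Θ_{p,κ}(x) = exp(κ‖x‖₂²)[(1+‖x‖_p^p)(1+‖x'‖₂²) + (p/2)² ∫₀¹ x'(r)²|x r|^{p-2} dr]`. -/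
noncomputable def ThetaWeight (p κ : ℝ) (x x' : ℝ → ℝ) : ℝ :=
  if p = 2 then
    Real.exp (κ * ∫ r in Ioo (0:ℝ) 1, (x r) ^ 2) *
      (1 + ∫ r in Ioo (0:ℝ) 1, (x' r) ^ 2)
  else
    Real.exp (κ * ∫ r in Ioo (0:ℝ) 1, (x r) ^ 2) *
      ((1 + ∫ r in Ioo (0:ℝ) 1, |x r| ^ p) * (1 + ∫ r in Ioo (0:ℝ) 1, (x' r) ^ 2)
        + (p / 2) ^ 2 * ∫ r in Ioo (0:ℝ) 1, (x' r) ^ 2 * |x r| ^ (p - 2))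

private lemma rpow_le_one_add (a q q' : ℝ) (ha : 0 ≤ a) (hq : 0 ≤ q) (hqq' : q ≤ q') :
    a ^ q ≤ 1 + a ^ q' := by
  rcases le_or_gt a 1 with h | h
  · calc a ^ q ≤ 1 := Real.rpow_le_one ha h hq
    _ ≤ 1 + a ^ q' := le_add_of_nonneg_right (Real.rpow_nonneg ha _)
  · calc a ^ q ≤ a ^ q' := Real.rpow_le_rpow_of_exponent_le h.le hqq'
    _ ≤ 1 + a ^ q' := le_add_of_nonneg_left one_pos.le


set_option maxHeartbeats 1000000 in
/-- For `2 ≤ p ≤ p' < ∞` and `0 < κ ≤ κ'` there is a constant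
`c_p ∈ (0,∞)` depending only on `p` such that `Θ_{p,κ}(x) ≤ c_p Θ_{p',κ'}(x)` for every
continuously differentiable `x : [0,1] → ℝ` with `x 0 = x 1 = 0`. -/
theorem ThetaWeight_mono (p : ℝ) (hp : 2 ≤ p) :
    ∃ c : ℝ, 0 < c ∧
      ∀ (p' κ κ' : ℝ), p ≤ p' → 0 < κ → κ ≤ κ' →
        ∀ (x x' : ℝ → ℝ),
          (∀ r ∈ Icc (0:ℝ) 1, HasDerivWithinAt x (x' r) (Icc (0:ℝ) 1) r) →
          ContinuousOn x' (Icc (0:ℝ) 1) →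
          x 0 = 0 → x 1 = 0 →
          ThetaWeight p κ x x' ≤ c * ThetaWeight p' κ' x x' := by
  refine ⟨2 + (p / 2) ^ 2, by positivity, ?_⟩
  intro p' κ κ' hpp' hκ hκκ' x x' hderiv hx'c h0 h1
  have hxc : ContinuousOn x (Icc (0:ℝ) 1) :=
    fun r hr => (hderiv r hr).differentiableWithinAt.continuousWithinAt
  have key : ∀ f : ℝ → ℝ, ContinuousOn f (Icc (0:ℝ) 1) → IntegrableOn f (Ioo (0:ℝ) 1) :=
    fun f hf => hf.integrableOn_Icc.mono_set Ioo_subset_Icc_self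
  set S := ∫ r in Ioo (0:ℝ) 1, (x r) ^ 2 with hSdef
  set B := ∫ r in Ioo (0:ℝ) 1, (x' r) ^ 2 with hBdef
  have hS : 0 ≤ S := setIntegral_nonneg measurableSet_Ioo fun r _ => sq_nonneg _
  have hB : 0 ≤ B := setIntegral_nonneg measurableSet_Ioo fun r _ => sq_nonneg _
  have hexp : Real.exp (κ * S) ≤ Real.exp (κ' * S) :=
    Real.exp_le_exp.2 (mul_le_mul_of_nonneg_right hκκ' hS)
  have hexp'pos : 0 < Real.exp (κ' * S) := Real.exp_pos _
  have hc1 : (1 : ℝ) ≤ 2 + (p / 2) ^ 2 := by nlinarith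
  by_cases hp'2 : p' = 2
  · -- then p = 2 as well
    have hp2 : p = 2 := le_antisymm (hp'2 ▸ hpp') hp
    rw [ThetaWeight, ThetaWeight, if_pos hp2, if_pos hp'2]
    have h1B : (0:ℝ) ≤ 1 + B := by linarith
    calc Real.exp (κ * S) * (1 + B) ≤ Real.exp (κ' * S) * (1 + B) :=
          mul_le_mul_of_nonneg_right hexp h1B
      _ ≤ (2 + (p / 2) ^ 2) * (Real.exp (κ' * S) * (1 + B)) := by
          nlinarith [mul_nonneg hexp'pos.le h1B]
  · have hA' : 0 ≤ ∫ r in Ioo (0:ℝ) 1, |x r| ^ p' :=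
      setIntegral_nonneg measurableSet_Ioo fun r _ => Real.rpow_nonneg (abs_nonneg _) _
    have hI' : 0 ≤ ∫ r in Ioo (0:ℝ) 1, (x' r) ^ 2 * |x r| ^ (p' - 2) :=
      setIntegral_nonneg measurableSet_Ioo fun r _ =>
        mul_nonneg (sq_nonneg _) (Real.rpow_nonneg (abs_nonneg _) _)
    set A' := ∫ r in Ioo (0:ℝ) 1, |x r| ^ p' with hA'def
    set I' := ∫ r in Ioo (0:ℝ) 1, (x' r) ^ 2 * |x r| ^ (p' - 2) with hI'def
    have hq'q : (p / 2) ^ 2 ≤ (p' / 2) ^ 2 := by nlinarith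
    by_cases hp2 : p = 2
    · rw [ThetaWeight, ThetaWeight, if_pos hp2, if_neg hp'2]
      have hinner : (1 + B) ≤ (1 + A') * (1 + B) + (p' / 2) ^ 2 * I' := by
        nlinarith [mul_nonneg hA' hB, mul_nonneg (by positivity : (0:ℝ) ≤ (p' / 2) ^ 2) hI']
      have hinner0 : (0:ℝ) ≤ (1 + A') * (1 + B) + (p' / 2) ^ 2 * I' := by
        nlinarith [mul_nonneg hA' hB]
      calc Real.exp (κ * S) * (1 + B) ≤ Real.exp (κ' * S) * (1 + B) :=
            mul_le_mul_of_nonneg_right hexp (by linarith)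
        _ ≤ Real.exp (κ' * S) * ((1 + A') * (1 + B) + (p' / 2) ^ 2 * I') :=
            mul_le_mul_of_nonneg_left hinner hexp'pos.le
        _ ≤ (2 + (p / 2) ^ 2) * (Real.exp (κ' * S) * ((1 + A') * (1 + B) + (p' / 2) ^ 2 * I')) := by
            nlinarith [mul_nonneg hexp'pos.le hinner0]
    · -- main case: 2 < p ≤ p'
      have hp2' : 2 < p := lt_of_le_of_ne hp (Ne.symm hp2)
      rw [ThetaWeight, ThetaWeight, if_neg hp2, if_neg hp'2]
      set A := ∫ r in Ioo (0:ℝ) 1, |x r| ^ p with hAdef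
      set I := ∫ r in Ioo (0:ℝ) 1, (x' r) ^ 2 * |x r| ^ (p - 2) with hIdef
      have hA : 0 ≤ A :=
        setIntegral_nonneg measurableSet_Ioo fun r _ => Real.rpow_nonneg (abs_nonneg _) _
      have hI : 0 ≤ I :=
        setIntegral_nonneg measurableSet_Ioo fun r _ =>
          mul_nonneg (sq_nonneg _) (Real.rpow_nonneg (abs_nonneg _) _)
      -- continuity of the integrands
      have cxp : ContinuousOn (fun r => |x r| ^ p) (Icc (0:ℝ) 1) :=
        hxc.abs.rpow_const fun r _ => Or.inr (by linarith)
      have cxp' : ContinuousOn (fun r => |x r| ^ p') (Icc (0:ℝ) 1) :=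
        hxc.abs.rpow_const fun r _ => Or.inr (by linarith)
      have cxm : ContinuousOn (fun r => |x r| ^ (p - 2)) (Icc (0:ℝ) 1) :=
        hxc.abs.rpow_const fun r _ => Or.inr (by linarith)
      have cxm' : ContinuousOn (fun r => |x r| ^ (p' - 2)) (Icc (0:ℝ) 1) :=
        hxc.abs.rpow_const fun r _ => Or.inr (by linarith)
      have cx'2 : ContinuousOn (fun r => (x' r) ^ 2) (Icc (0:ℝ) 1) := hx'c.pow 2
      have hone : IntegrableOn (fun _ : ℝ => (1:ℝ)) (Ioo (0:ℝ) 1) :=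
        integrableOn_const (by simp [Real.volume_Ioo])
      -- A ≤ 1 + A'
      have hAle : A ≤ 1 + A' := by
        calc A ≤ ∫ r in Ioo (0:ℝ) 1, (1 + |x r| ^ p') :=
              setIntegral_mono_on (key _ cxp) (key _ (continuousOn_const.add cxp'))
                measurableSet_Ioo
                (fun r _ => rpow_le_one_add _ _ _ (abs_nonneg _) (by linarith) hpp')
          _ = 1 + A' := by
              rw [integral_add hone (key _ cxp')]
              simp [Real.volume_Ioo, hA'def]
      -- I ≤ B + I'
      have hIle : I ≤ B + I' := by
        calc I ≤ ∫ r in Ioo (0:ℝ) 1, ((x' r) ^ 2 + (x' r) ^ 2 * |x r| ^ (p' - 2)) :=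
              setIntegral_mono_on (key _ (cx'2.mul cxm))
                (key _ (cx'2.add (cx'2.mul cxm'))) measurableSet_Ioo
                (fun r _ => by
                  have := rpow_le_one_add (|x r|) (p - 2) (p' - 2) (abs_nonneg _)
                    (by linarith) (by linarith)
                  nlinarith [sq_nonneg (x' r)])
          _ = B + I' := integral_add (key _ cx'2) (key _ (cx'2.mul cxm'))
      -- put it together
      have hq1 : (1:ℝ) ≤ (p / 2) ^ 2 := by nlinarith
      have hinner1 : (1 + A) * (1 + B) + (p / 2) ^ 2 * I
          ≤ (2 + A') * (1 + B) + (p / 2) ^ 2 * (B + I') := by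
        have h1 : (1 + A) * (1 + B) ≤ (2 + A') * (1 + B) :=
          mul_le_mul_of_nonneg_right (by linarith) (by linarith)
        have h2 : (p / 2) ^ 2 * I ≤ (p / 2) ^ 2 * (B + I') :=
          mul_le_mul_of_nonneg_left hIle (by positivity)
        linarith
      have hinner2 : (2 + A') * (1 + B) + (p / 2) ^ 2 * (B + I')
          ≤ (2 + (p / 2) ^ 2) * ((1 + A') * (1 + B) + (p' / 2) ^ 2 * I') := by
        have e1 : (0:ℝ) ≤ (1 + (p / 2) ^ 2) * A' := mul_nonneg (by positivity) hA'
        have e2 : (0:ℝ) ≤ (1 + (p / 2) ^ 2) * (A' * B) :=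
          mul_nonneg (by positivity) (mul_nonneg hA' hB)
        have e3 : (p / 2) ^ 2 * I' ≤ (p' / 2) ^ 2 * I' :=
          mul_le_mul_of_nonneg_right hq'q hI'
        have e4 : (p' / 2) ^ 2 * I' ≤ (2 + (p / 2) ^ 2) * ((p' / 2) ^ 2 * I') :=
          le_mul_of_one_le_left (mul_nonneg (by positivity) hI') (by linarith)
        have expand : (2 + (p / 2) ^ 2) * ((1 + A') * (1 + B) + (p' / 2) ^ 2 * I')
            - ((2 + A') * (1 + B) + (p / 2) ^ 2 * (B + I'))
            = (p / 2) ^ 2 + (1 + (p / 2) ^ 2) * A' + (1 + (p / 2) ^ 2) * (A' * B)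
              + ((2 + (p / 2) ^ 2) * ((p' / 2) ^ 2 * I') - (p / 2) ^ 2 * I') := by ring
        linarith [e1, e2, e3, e4, expand, sq_nonneg (p / 2)]
      have hLHS0 : (0:ℝ) ≤ (1 + A) * (1 + B) + (p / 2) ^ 2 * I := by
        nlinarith [mul_nonneg hA hB]
      calc Real.exp (κ * S) * ((1 + A) * (1 + B) + (p / 2) ^ 2 * I)
          ≤ Real.exp (κ' * S) * ((1 + A) * (1 + B) + (p / 2) ^ 2 * I) :=
            mul_le_mul_of_nonneg_right hexp hLHS0
        _ ≤ Real.exp (κ' * S) * ((2 + (p / 2) ^ 2) *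
              ((1 + A') * (1 + B) + (p' / 2) ^ 2 * I')) :=
            mul_le_mul_of_nonneg_left (le_trans hinner1 hinner2) hexp'pos.le
        _ = (2 + (p / 2) ^ 2) *
              (Real.exp (κ' * S) * ((1 + A') * (1 + B) + (p' / 2) ^ 2 * I')) := by ring
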